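/- Determinant of a 1RSB-structured matrix: for positive integers L dividing τ and reals F, χ, H, det( F·1_{τ×τ} + χ·I_τ + H·(I_{τ/L} ⊗ 1_{L×L}) ) = (χ + LH + τF) · (χ + LH)^{τ/L − 1} · χ^{τ − τ/L}. -/

import Mathlib

open Matrix


lemma detL (L : ℕ) (hL : 0 < L) (χ H : ℝ) (hχ : χ ≠ 0) :
    ((χ • (1 : Matrix (Fin L) (Fin L) ℝ) + H • Matrix.of fun _ _ => (1:ℝ))).det
      = χ ^ (L - 1) * (χ + L * H) := by
  have h1 : (H • Matrix.of fun _ _ => (1:ℝ) : Matrix (Fin L) (Fin L) ℝ) =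
      replicateCol Unit (fun _ => H) * replicateRow Unit (fun _ => (1:ℝ)) := by
    ext i j; simp [mul_apply]
  have hdet : (χ • (1 : Matrix (Fin L) (Fin L) ℝ)).det = χ ^ L := by
    simp [det_smul]
  have hU : IsUnit (χ • (1 : Matrix (Fin L) (Fin L) ℝ)).det := by
    rw [hdet]; exact isUnit_iff_ne_zero.2 (pow_ne_zero _ hχ)
  have hinv : (χ • (1 : Matrix (Fin L) (Fin L) ℝ))⁻¹ = χ⁻¹ • 1 := by
    apply inv_eq_right_inv
    rw [Matrix.smul_mul, Matrix.mul_smul, Matrix.one_mul, smul_smul, mul_inv_cancel₀ hχ, one_smul]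
  rw [h1, det_add_replicateCol_mul_replicateRow hU, hdet, hinv, det_unique]
  simp [mul_apply]
  field_simp
  rw [show χ ^ L = χ ^ (L-1) * χ by rw [← pow_succ, Nat.sub_add_cancel hL]]
  ring

lemma detM (k L : ℕ) (χ H : ℝ) :
    ((χ • (1 : Matrix (Fin k × Fin L) (Fin k × Fin L) ℝ)
      + H • Matrix.of fun p q : Fin k × Fin L => if p.1 = q.1 then (1:ℝ) else 0)).det
    = ((χ • (1 : Matrix (Fin L) (Fin L) ℝ) + H • Matrix.of fun _ _ => (1:ℝ))).det ^ k := by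
  have hM : (χ • (1 : Matrix (Fin k × Fin L) (Fin k × Fin L) ℝ)
      + H • Matrix.of fun p q : Fin k × Fin L => if p.1 = q.1 then (1:ℝ) else 0)
      = reindex (Equiv.prodComm (Fin L) (Fin k)) (Equiv.prodComm (Fin L) (Fin k))
        (blockDiagonal fun _ : Fin k =>
          χ • (1 : Matrix (Fin L) (Fin L) ℝ) + H • Matrix.of fun _ _ => (1:ℝ)) := by
    ext ⟨a, b⟩ ⟨c, d⟩
    simp [blockDiagonal_apply, one_apply, Prod.ext_iff]
    by_cases h : a = c <;> simp [h]
  rw [hM, det_reindex_self, det_blockDiagonal, Finset.prod_const, Finset.card_univ,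
    Fintype.card_fin]

lemma BdSq (k L : ℕ) :
    (Matrix.of fun p q : Fin k × Fin L => if p.1 = q.1 then (1:ℝ) else 0) *
    (Matrix.of fun p q : Fin k × Fin L => if p.1 = q.1 then (1:ℝ) else 0)
    = (L : ℝ) • (Matrix.of fun p q : Fin k × Fin L => if p.1 = q.1 then (1:ℝ) else 0) := by
  ext ⟨a, b⟩ ⟨c, d⟩
  simp [mul_apply, Fintype.sum_prod_type, Finset.sum_ite_eq, ite_and]
  by_cases h : a = c <;> simp [h]

lemma Minv (k L : ℕ) (χ H : ℝ) (hχ : χ ≠ 0) (h2 : χ + L * H ≠ 0) :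
    (χ • (1 : Matrix (Fin k × Fin L) (Fin k × Fin L) ℝ)
      + H • Matrix.of fun p q : Fin k × Fin L => if p.1 = q.1 then (1:ℝ) else 0)⁻¹
    = χ⁻¹ • (1 : Matrix (Fin k × Fin L) (Fin k × Fin L) ℝ)
      + (-(H / (χ * (χ + L * H)))) • Matrix.of fun p q : Fin k × Fin L =>
          if p.1 = q.1 then (1:ℝ) else 0 := by
  apply inv_eq_right_inv
  set Bd := Matrix.of fun p q : Fin k × Fin L => if p.1 = q.1 then (1:ℝ) else 0 with hBd
  rw [Matrix.add_mul, Matrix.mul_add, Matrix.mul_add, Matrix.smul_mul, Matrix.smul_mul,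
    Matrix.smul_mul, Matrix.smul_mul, Matrix.mul_smul, Matrix.mul_smul, Matrix.mul_smul,
    Matrix.mul_smul, Matrix.one_mul, Matrix.mul_one, BdSq, smul_smul, smul_smul, smul_smul,
    smul_smul, smul_smul, mul_inv_cancel₀ hχ, one_smul, Matrix.one_mul, ← hBd,
    add_assoc, ← add_smul]
  have e2 : χ * -(H / (χ * (χ + ↑L * H))) + (H * χ⁻¹ + H * -(H / (χ * (χ + ↑L * H))) * ↑L) = 0 := by
    have e : H / (χ * (χ + ↑L * H)) = H * χ⁻¹ * (χ + ↑L * H)⁻¹ := by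
      rw [div_eq_mul_inv, mul_inv, mul_assoc]
    rw [e]
    linear_combination (-H * χ⁻¹) * (mul_inv_cancel₀ h2)
  have e3 : (χ * -(H / (χ * (χ + ↑L * H)))) • Bd
      + (H * χ⁻¹ + H * -(H / (χ * (χ + ↑L * H))) * ↑L) • Bd = 0 := by
    rw [← add_smul, e2, zero_smul]
  rw [e3, add_zero]


lemma det_generic (k L : ℕ) (hk : 0 < k) (hL : 0 < L) (F χ H : ℝ)
    (hχ : χ ≠ 0) (h2 : χ + L * H ≠ 0) :
    (F • (Matrix.of fun _ _ => (1:ℝ) : Matrix (Fin k × Fin L) (Fin k × Fin L) ℝ)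
      + χ • (1 : Matrix (Fin k × Fin L) (Fin k × Fin L) ℝ)
      + H • Matrix.of fun p q : Fin k × Fin L => if p.1 = q.1 then (1:ℝ) else 0).det
    = (χ + (L : ℝ) * H + ((k * L : ℕ) : ℝ) * F) * (χ + (L : ℝ) * H) ^ (k - 1)
        * χ ^ (k * L - k) := by
  have hA : (F • (Matrix.of fun _ _ => (1:ℝ) : Matrix (Fin k × Fin L) (Fin k × Fin L) ℝ)
      + χ • (1 : Matrix (Fin k × Fin L) (Fin k × Fin L) ℝ)
      + H • Matrix.of fun p q : Fin k × Fin L => if p.1 = q.1 then (1:ℝ) else 0)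
      = (χ • (1 : Matrix (Fin k × Fin L) (Fin k × Fin L) ℝ)
        + H • Matrix.of fun p q : Fin k × Fin L => if p.1 = q.1 then (1:ℝ) else 0)
        + replicateCol Unit (fun _ => (1:ℝ)) * replicateRow Unit (fun _ => F) := by
    ext p q
    simp [mul_apply, one_apply]
    ring
  have hMdet : (χ • (1 : Matrix (Fin k × Fin L) (Fin k × Fin L) ℝ)
      + H • Matrix.of fun p q : Fin k × Fin L => if p.1 = q.1 then (1:ℝ) else 0).det
      = (χ ^ (L - 1) * (χ + L * H)) ^ k := by
    rw [detM, detL L hL χ H hχ]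
  have hU : IsUnit (χ • (1 : Matrix (Fin k × Fin L) (Fin k × Fin L) ℝ)
      + H • Matrix.of fun p q : Fin k × Fin L => if p.1 = q.1 then (1:ℝ) else 0).det := by
    rw [hMdet]
    exact isUnit_iff_ne_zero.2 (pow_ne_zero _ (mul_ne_zero (pow_ne_zero _ hχ) h2))
  rw [hA, det_add_replicateCol_mul_replicateRow hU, hMdet, Minv k L χ H hχ h2, det_unique]
  have key : (1 + replicateRow Unit (fun _ => F) (n := Fin k × Fin L) *
        (χ⁻¹ • (1 : Matrix (Fin k × Fin L) (Fin k × Fin L) ℝ)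
          + (-(H / (χ * (χ + L * H)))) • Matrix.of fun p q : Fin k × Fin L =>
              if p.1 = q.1 then (1:ℝ) else 0) *
        (replicateCol Unit (fun _ => (1:ℝ)) : Matrix (Fin k × Fin L) Unit ℝ) : Matrix Unit Unit ℝ) default default
      = (χ + L * H + k * L * F) / (χ + L * H) := by
    simp [mul_apply, Fintype.sum_prod_type, one_apply, ite_and, mul_add,
      Finset.sum_ite_eq, Finset.sum_ite_eq', Finset.mul_sum, Finset.sum_add_distrib]
    rw [Finset.sum_congr rfl fun x _ => Finset.sum_congr rfl fun x_1 _ => Finset.sum_comm]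
    simp [Finset.sum_ite_eq']
    have h3 : χ * χ + χ * (↑L * H) ≠ 0 := by
      have e : χ * χ + χ * (↑L * H) = χ * (χ + ↑L * H) := by ring
      rw [e]; exact mul_ne_zero hχ h2
    field_simp [h3]
    ring
  rw [key]
  obtain ⟨k', rfl⟩ : ∃ k', k = k' + 1 := ⟨k - 1, (Nat.succ_pred_eq_of_pos hk).symm⟩
  obtain ⟨L', rfl⟩ : ∃ L', L = L' + 1 := ⟨L - 1, (Nat.succ_pred_eq_of_pos hL).symm⟩
  have e1 : (k' + 1) * (L' + 1) - (k' + 1) = L' * (k' + 1) := by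
    rw [Nat.mul_succ, Nat.add_sub_cancel, Nat.mul_comm]
  simp only [Nat.add_sub_cancel, e1]
  rw [mul_pow, ← pow_mul, pow_succ]
  have h4 : χ + (L' : ℝ) * H + H ≠ 0 := by
    push_cast at h2
    intro hc; exact h2 (by linarith)
  rw [← mul_div_assoc, div_eq_iff h2]
  push_cast
  ring

/-- Determinant of a 1RSB-structured matrix (with `τ = k·L`):
`det(F·1 + χ·I + H·(I_{τ/L} ⊗ 1_{L×L})) = (χ+LH+τF)(χ+LH)^{τ/L−1} χ^{τ−τ/L}`. -/
theorem oneRSB_det (k L : ℕ) (hk : 0 < k) (hL : 0 < L) (F χ H : ℝ) :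
    let J : Matrix (Fin k × Fin L) (Fin k × Fin L) ℝ := Matrix.of fun _ _ => 1
    let Bd : Matrix (Fin k × Fin L) (Fin k × Fin L) ℝ :=
      Matrix.of fun p q => if p.1 = q.1 then 1 else 0
    let A : Matrix (Fin k × Fin L) (Fin k × Fin L) ℝ :=
      F • J + χ • (1 : Matrix (Fin k × Fin L) (Fin k × Fin L) ℝ) + H • Bd
    A.det =
      (χ + (L : ℝ) * H + ((k * L : ℕ) : ℝ) * F) *
        (χ + (L : ℝ) * H) ^ (k - 1) * χ ^ (k * L - k) := by
  intro J Bd A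
  set f : ℝ → ℝ := fun x =>
    (F • J + x • (1 : Matrix (Fin k × Fin L) (Fin k × Fin L) ℝ) + H • Bd).det with hf_def
  set g : ℝ → ℝ := fun x =>
    (x + (L : ℝ) * H + ((k * L : ℕ) : ℝ) * F) * (x + (L : ℝ) * H) ^ (k - 1)
      * x ^ (k * L - k) with hg_def
  have hfg : f = g := by
    have hdense : Dense (({0, -((L : ℝ) * H)} : Set ℝ)ᶜ) :=
      Set.Countable.dense_compl ℝ ((Set.countable_singleton _).insert _)
    have hf : Continuous f := by
      apply Continuous.matrix_det
      apply continuous_pi; intro i; apply continuous_pi; intro j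
      simp only [Matrix.add_apply, Matrix.smul_apply, smul_eq_mul]
      fun_prop
    have hg : Continuous g := by fun_prop
    apply hf.ext_on hdense hg
    intro x hx
    simp only [Set.mem_compl_iff, Set.mem_insert_iff, Set.mem_singleton_iff, not_or] at hx
    have hx1 : x ≠ 0 := hx.1
    have hx2 : x + (L : ℝ) * H ≠ 0 := by
      intro hc; exact hx.2 (by linarith)
    exact det_generic k L hk hL F x H hx1 hx2
  show f χ = g χ
  rw [hfg]
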